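/- arXiv:math/0308043 — 2 statements merged into one kernel-verified Lean document; each statement's English description precedes it below -/
import Mathlib

section
/- Let f : ℝⁿ → ℂ be continuous with compact support, and for t > 0 let f_t(z) = c_n t^{−n/2} ∫_{ℝⁿ} f(y) exp(−(z−y)·(z−y)/t) dy for z ∈ ℂⁿ, where (z−y)·(z−y) = Σ (z_j − y_j)² and c_n normalizes the heat kernel. Then f_t is an entire function on ℂⁿ, and for every 0 < C < 1 and N > 0, sup over {z ∈ ℂⁿ : |Im z| ≤ C |Re z|} of |f_t(z)| e^{N|z|} is finite. -/
open MeasureTheory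

set_option maxHeartbeats 1000000
set_option synthInstance.maxHeartbeats 400000

lemma norm_gauss {n : ℕ} (t : ℝ) (z : Fin n → ℂ) (y : Fin n → ℝ) :
    ‖Complex.exp (-(∑ j, (z j - (y j:ℂ))^2)/(t:ℂ))‖ =
      Real.exp ((∑ j, ((z j).im^2 - ((z j).re - y j)^2))/t) := by
  rw [Complex.norm_exp]
  congr 1
  rw [Complex.div_ofReal_re, Complex.neg_re, Complex.re_sum, ← Finset.sum_neg_distrib]
  refine congrArg (· / t) (Finset.sum_congr rfl fun j _ => ?_)
  simp [pow_two, Complex.mul_re]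

noncomputable def gaussD {n : ℕ} (t : ℝ) (y : Fin n → ℝ) (z : Fin n → ℂ) : (Fin n → ℂ) →L[ℂ] ℂ :=
  Complex.exp (-(∑ j, (z j - (y j:ℂ))^2)/(t:ℂ)) •
    ((-(1:ℂ)/t) • ∑ j, (2*(z j - (y j:ℂ))) • (ContinuousLinearMap.proj j : (Fin n → ℂ) →L[ℂ] ℂ))

lemma hasFDerivAt_gauss {n : ℕ} (t : ℝ) (y : Fin n → ℝ) (z : Fin n → ℂ) :
    HasFDerivAt (fun z : Fin n → ℂ => Complex.exp (-(∑ j, (z j - (y j:ℂ))^2)/(t:ℂ)))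
      (gaussD t y z) z := by
  have hS : HasFDerivAt (fun z : Fin n → ℂ => ∑ j, (z j - (y j:ℂ))^2)
      (∑ j, (2*(z j - (y j:ℂ))) • (ContinuousLinearMap.proj j : (Fin n → ℂ) →L[ℂ] ℂ)) z := by
    apply HasFDerivAt.fun_sum
    intro j _
    have hu : HasFDerivAt (fun z : Fin n → ℂ => z j - (y j:ℂ))
        (ContinuousLinearMap.proj j : (Fin n → ℂ) →L[ℂ] ℂ) z :=
      ((ContinuousLinearMap.proj j : (Fin n → ℂ) →L[ℂ] ℂ).hasFDerivAt (x := z)).sub_const _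
    have h2 := hu.mul hu
    have : (fun z : Fin n → ℂ => (z j - (y j:ℂ))^2) = fun z => (z j - (y j:ℂ)) * (z j - (y j:ℂ)) := by
      funext w; ring
    rw [this]
    exact h2.congr_fderiv (by ext v; simp [two_mul, add_mul])
  have hQ : HasFDerivAt (fun z : Fin n → ℂ => -(∑ j, (z j - (y j:ℂ))^2)/(t:ℂ))
      ((-(1:ℂ)/t) • ∑ j, (2*(z j - (y j:ℂ))) • (ContinuousLinearMap.proj j : (Fin n → ℂ) →L[ℂ] ℂ)) z := by
    have he : (fun z : Fin n → ℂ => -(∑ j, (z j - (y j:ℂ))^2)/(t:ℂ))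
        = fun z => (-(1:ℂ)/t) * ∑ j, (z j - (y j:ℂ))^2 := by funext w; ring
    rw [he]
    exact hS.const_mul _
  exact hQ.cexp

lemma continuous_gaussD {n : ℕ} (t : ℝ) (z : Fin n → ℂ) :
    Continuous (fun y : Fin n → ℝ => gaussD t y z) := by
  unfold gaussD
  apply Continuous.fun_smul
  · exact Complex.continuous_exp.comp (by fun_prop)
  · apply Continuous.fun_const_smul
    apply continuous_finset_sum
    intro j _
    exact Continuous.fun_smul
      (show Continuous fun y : Fin n → ℝ => 2*(z j - (y j:ℂ)) by fun_prop)
      (continuous_const :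
        Continuous fun _ : Fin n → ℝ => (ContinuousLinearMap.proj j : (Fin n → ℂ) →L[ℂ] ℂ))

lemma norm_proj_le {n : ℕ} (j : Fin n) :
    ‖(ContinuousLinearMap.proj j : (Fin n → ℂ) →L[ℂ] ℂ)‖ ≤ 1 :=
  ContinuousLinearMap.opNorm_le_bound _ zero_le_one fun v => by
    simpa using norm_le_pi_norm v j

lemma norm_gaussD_le {n : ℕ} {t : ℝ} (ht : 0 < t) (y : Fin n → ℝ) (z : Fin n → ℂ) :
    ‖gaussD t y z‖ ≤
      Real.exp ((∑ j, (z j).im^2)/t) * ((1/t) * ∑ j, (2 * ‖z j - (y j:ℂ)‖)) := by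
  have hsum0 : (0:ℝ) ≤ ∑ j, (2 * ‖z j - (y j:ℂ)‖) :=
    Finset.sum_nonneg fun j _ => by positivity
  refine ContinuousLinearMap.opNorm_le_bound _ (by positivity) fun v => ?_
  have happ : gaussD t y z v = Complex.exp (-(∑ j, (z j - (y j:ℂ))^2)/(t:ℂ)) *
      ((-(1:ℂ)/t) * ∑ j, (2*(z j - (y j:ℂ))) * v j) := by
    simp [gaussD, ContinuousLinearMap.sum_apply, smul_eq_mul, Finset.mul_sum]
  rw [happ, norm_mul, norm_mul]
  have h1 : ‖Complex.exp (-(∑ j, (z j - (y j:ℂ))^2)/(t:ℂ))‖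
      ≤ Real.exp ((∑ j, (z j).im^2)/t) := by
    rw [norm_gauss]
    apply Real.exp_le_exp.2
    gcongr with j hj
    nlinarith [sq_nonneg ((z j).re - y j)]
  have h2 : ‖(-(1:ℂ)/(t:ℂ))‖ = 1/t := by
    rw [norm_div, norm_neg, norm_one, Complex.norm_real, Real.norm_eq_abs, abs_of_pos ht]
  have h3 : ‖∑ j, (2*(z j - (y j:ℂ))) * v j‖ ≤ (∑ j, (2 * ‖z j - (y j:ℂ)‖)) * ‖v‖ := by
    calc ‖∑ j, (2*(z j - (y j:ℂ))) * v j‖ ≤ ∑ j, ‖(2*(z j - (y j:ℂ))) * v j‖ :=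
          norm_sum_le _ _
      _ ≤ ∑ j, (2 * ‖z j - (y j:ℂ)‖) * ‖v‖ := by
          refine Finset.sum_le_sum fun j _ => ?_
          rw [norm_mul, norm_mul]
          have h2 : ‖(2:ℂ)‖ = 2 := by norm_num
          rw [h2]
          gcongr
          exact norm_le_pi_norm v j
      _ = (∑ j, (2 * ‖z j - (y j:ℂ)‖)) * ‖v‖ := (Finset.sum_mul _ _ _).symm
  rw [h2]
  calc ‖Complex.exp (-(∑ j, (z j - (y j:ℂ))^2)/(t:ℂ))‖
        * (1/t * ‖∑ j, (2*(z j - (y j:ℂ))) * v j‖)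
      ≤ Real.exp ((∑ j, (z j).im^2)/t) * (1/t * ((∑ j, (2 * ‖z j - (y j:ℂ)‖)) * ‖v‖)) :=
        mul_le_mul h1 (mul_le_mul_of_nonneg_left h3 (by positivity)) (by positivity)
          (Real.exp_pos _).le
    _ = Real.exp ((∑ j, (z j).im^2)/t) * (1/t * ∑ j, (2 * ‖z j - (y j:ℂ)‖)) * ‖v‖ := by
        ring

/-- For `f` continuous with compact support on ℝⁿ and `t > 0`, the complexified
Gaussian regularization `f_t(z) = (πt)^{-n/2} ∫ f(y) e^{-(z-y)·(z-y)/t} dy` is an entire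
function of `z ∈ ℂⁿ`, and in every cone `|Im z| ≤ C|Re z|` with `0 < C < 1` it decays faster
than any power of `e^{-|z|}`. -/
theorem gaussian_regularization_entire_with_decay
    {n : ℕ} (f : (Fin n → ℝ) → ℂ) (hf : Continuous f) (hsupp : HasCompactSupport f)
    (t : ℝ) (ht : 0 < t)
    (F : (Fin n → ℂ) → ℂ)
    (hF : ∀ z, F z = (((Real.pi * t) ^ (-(n : ℝ) / 2) : ℝ) : ℂ) *
      ∫ y : Fin n → ℝ, f y * Complex.exp (-(∑ j, (z j - (y j : ℂ)) ^ 2) / (t : ℂ))) :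
    Differentiable ℂ F ∧
    ∀ C : ℝ, 0 < C → C < 1 → ∀ N : ℝ, 0 < N →
      ∃ B : ℝ, ∀ z : Fin n → ℂ,
        Real.sqrt (∑ j, (z j).im ^ 2) ≤ C * Real.sqrt (∑ j, (z j).re ^ 2) →
        ‖F z‖ * Real.exp (N * Real.sqrt (∑ j, ‖z j‖ ^ 2)) ≤ B := by
  set c0 : ℝ := (Real.pi * t) ^ (-(n:ℝ)/2) with hc0
  set g : (Fin n → ℂ) → (Fin n → ℝ) → ℂ :=
    fun z y => f y * Complex.exp (-(∑ j, (z j - (y j:ℂ))^2)/(t:ℂ)) with hgdef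
  have hgc : ∀ z, Continuous (fun y => g z y) := fun z =>
    hf.mul (Complex.continuous_exp.comp (by fun_prop))
  have hgsupp : ∀ z, HasCompactSupport (fun y => g z y) := fun z => hsupp.mul_right
  have hgint : ∀ z, Integrable (fun y => g z y) := fun z =>
    (hgc z).integrable_of_hasCompactSupport (hgsupp z)
  have hnormint : Integrable (fun y => ‖f y‖) :=
    hf.norm.integrable_of_hasCompactSupport hsupp.norm
  obtain ⟨R₀, hR₀⟩ : ∃ R₀, ∀ y ∈ tsupport f, Real.sqrt (∑ j, y j ^ 2) ≤ R₀ := by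
    obtain ⟨R₀, hR₀⟩ := ((hsupp : IsCompact (tsupport f)).image
      (show Continuous fun y : Fin n → ℝ => Real.sqrt (∑ j, y j ^ 2) by fun_prop)).bddAbove
    exact ⟨R₀, fun y hy => hR₀ (Set.mem_image_of_mem _ hy)⟩
  set R : ℝ := max R₀ 0 with hRdef
  have hR : 0 ≤ R := le_max_right _ _
  have hRy : ∀ y ∈ tsupport f, Real.sqrt (∑ j, y j ^ 2) ≤ R :=
    fun y hy => (hR₀ y hy).trans (le_max_left _ _)
  have hysum : ∀ y ∈ tsupport f, ∑ j, y j ^ 2 ≤ R^2 := by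
    intro y hy
    have h0 : (0:ℝ) ≤ ∑ j, y j ^ 2 := Finset.sum_nonneg fun j _ => sq_nonneg _
    calc ∑ j, y j ^ 2 = (Real.sqrt (∑ j, y j ^ 2))^2 := (Real.sq_sqrt h0).symm
      _ ≤ R^2 := pow_le_pow_left₀ (Real.sqrt_nonneg _) (hRy y hy) 2
  have hyj : ∀ y ∈ tsupport f, ∀ j, |y j| ≤ R := by
    intro y hy j
    rw [← Real.sqrt_sq_eq_abs]
    refine le_trans (Real.sqrt_le_sqrt ?_) (hRy y hy)
    exact Finset.single_le_sum (fun i _ => sq_nonneg (y i)) (Finset.mem_univ j)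
  -- Part 1: differentiability
  have hdiff : Differentiable ℂ fun z => ∫ y, g z y := by
    intro z₀
    set Cb : ℝ := Real.exp ((n:ℝ)*(‖z₀‖+1)^2/t) * ((1/t) * ((n:ℝ) * (2*(‖z₀‖+1+R)))) with hCbdef
    apply HasFDerivAt.differentiableAt
      (hasFDerivAt_integral_of_dominated_of_fderiv_le
        (F' := fun z y => f y • gaussD t y z) (bound := fun y => ‖f y‖ * Cb)
        (Metric.ball_mem_nhds z₀ one_pos) ?_ (hgint z₀) ?_ ?_ ?_ ?_)
    · exact Filter.Eventually.of_forall fun z => (hgc z).aestronglyMeasurable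
    · exact (hf.smul (continuous_gaussD t z₀)).aestronglyMeasurable
    · refine Filter.Eventually.of_forall fun y z hz => ?_
      show ‖f y • gaussD t y z‖ ≤ ‖f y‖ * Cb
      refine le_trans (ContinuousLinearMap.opNorm_smul_le (f y) (gaussD t y z)) ?_
      by_cases hfy : f y = 0
      · simp [hfy]
      · have hyK : y ∈ tsupport f := subset_tsupport f hfy
        have hzle : ‖z‖ ≤ ‖z₀‖ + 1 := by
          have h1 : ‖z - z₀‖ < 1 := mem_ball_iff_norm.1 hz
          calc ‖z‖ = ‖z₀ + (z - z₀)‖ := by congr 1; abel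
            _ ≤ ‖z₀‖ + ‖z - z₀‖ := norm_add_le _ _
            _ ≤ ‖z₀‖ + 1 := by linarith
        have hzj : ∀ j, ‖z j‖ ≤ ‖z₀‖ + 1 := fun j => (norm_le_pi_norm z j).trans hzle
        have hGb : ‖gaussD t y z‖ ≤ Cb := by
          refine (norm_gaussD_le ht y z).trans ?_
          rw [hCbdef]
          have hexp : (∑ j, (z j).im^2)/t ≤ (n:ℝ)*(‖z₀‖+1)^2/t := by
            gcongr
            calc ∑ j, (z j).im^2 ≤ ∑ j : Fin n, (‖z₀‖+1)^2 := by
                  refine Finset.sum_le_sum fun j _ => ?_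
                  have h1 : |(z j).im| ≤ ‖z j‖ := by
                    exact Complex.abs_im_le_norm (z j)
                  have h3 : |(z j).im| ≤ ‖z₀‖+1 := h1.trans (hzj j)
                  calc (z j).im^2 = |(z j).im|^2 := (sq_abs _).symm
                    _ ≤ (‖z₀‖+1)^2 := pow_le_pow_left₀ (abs_nonneg _) h3 2
              _ = (n:ℝ)*(‖z₀‖+1)^2 := by rw [Finset.sum_const]; simp [mul_comm]
          have hsum : ∑ j, (2 * ‖z j - (y j:ℂ)‖) ≤ (n:ℝ) * (2*(‖z₀‖+1+R)) := by
            calc ∑ j, (2 * ‖z j - (y j:ℂ)‖) ≤ ∑ j : Fin n, (2*(‖z₀‖+1+R)) := by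
                  refine Finset.sum_le_sum fun j _ => ?_
                  have h1 : ‖z j - (y j:ℂ)‖ ≤ ‖z j‖ + ‖((y j:ℝ):ℂ)‖ := norm_sub_le _ _
                  have h2 : ‖((y j:ℝ):ℂ)‖ = |y j| := by
                    rw [Complex.norm_real, Real.norm_eq_abs]
                  have := hyj y hyK j
                  nlinarith [hzj j]
              _ = (n:ℝ) * (2*(‖z₀‖+1+R)) := by rw [Finset.sum_const]; simp [mul_comm]
          exact mul_le_mul (Real.exp_le_exp.2 hexp)
            (mul_le_mul_of_nonneg_left hsum (by positivity)) (by positivity) (Real.exp_pos _).le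
        exact mul_le_mul_of_nonneg_left hGb (norm_nonneg _)
    · exact hnormint.mul_const _
    · exact Filter.Eventually.of_forall fun y z _ => (hasFDerivAt_gauss t y z).const_mul (f y)
  have hFd : Differentiable ℂ F := by
    have hFe : F = fun z => (c0:ℂ) * ∫ y, g z y := funext hF
    rw [hFe]
    exact hdiff.const_mul _
  refine ⟨hFd, ?_⟩
  -- Part 2: decay
  intro C hC0 hC1 N hN
  have h1C : 0 < 1 - C^2 := by nlinarith
  set a : ℝ := (1 - C^2)/t with hadef
  have ha0 : 0 < a := div_pos h1C ht
  set b : ℝ := 2*R/t + 2*N with hbdef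
  have hb0 : 0 ≤ b := by positivity
  set I : ℝ := ∫ y, ‖f y‖ with hIdef
  have hI0 : 0 ≤ I := integral_nonneg fun y => norm_nonneg _
  refine ⟨|c0| * I * Real.exp (b^2/(4*a)), ?_⟩
  intro z hz
  set X : ℝ := Real.sqrt (∑ j, (z j).re^2) with hXdef
  set Y : ℝ := Real.sqrt (∑ j, (z j).im^2) with hYdef
  have hX0 : 0 ≤ X := Real.sqrt_nonneg _
  have hY0 : 0 ≤ Y := Real.sqrt_nonneg _
  have hX2 : X^2 = ∑ j, (z j).re^2 := Real.sq_sqrt (Finset.sum_nonneg fun j _ => sq_nonneg _)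
  have hY2 : Y^2 = ∑ j, (z j).im^2 := Real.sq_sqrt (Finset.sum_nonneg fun j _ => sq_nonneg _)
  have hYX : Y^2 ≤ C^2 * X^2 := by nlinarith [hz]
  have hZ : Real.sqrt (∑ j, ‖z j‖^2) ≤ 2*X := by
    have h1 : (∑ j, ‖z j‖^2) = X^2 + Y^2 := by
      rw [hX2, hY2, ← Finset.sum_add_distrib]
      exact Finset.sum_congr rfl fun j _ => by
        rw [Complex.sq_norm, Complex.normSq_apply]; ring
    rw [h1]
    have h2 : X^2 + Y^2 ≤ (2*X)^2 := by nlinarith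
    calc Real.sqrt (X^2+Y^2) ≤ Real.sqrt ((2*X)^2) := Real.sqrt_le_sqrt h2
      _ = 2*X := Real.sqrt_sq (by positivity)
  set E : ℝ := Real.exp ((Y^2 - X^2 + 2*R*X)/t) with hEdef
  have hE0 : 0 < E := Real.exp_pos _
  have hpt : ∀ y, ‖g z y‖ ≤ ‖f y‖ * E := by
    intro y
    simp only [hgdef]
    rw [norm_mul, norm_gauss]
    by_cases hfy : f y = 0
    · simp [hfy]
    · have hyK : y ∈ tsupport f := subset_tsupport f hfy
      have hcs : (∑ j, (z j).re * y j) ≤ X * R := by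
        have h := Finset.sum_mul_sq_le_sq_mul_sq Finset.univ (fun j => (z j).re) y
        have h2 : (∑ j, (z j).re * y j)^2 ≤ (X*R)^2 := by
          calc (∑ j, (z j).re * y j)^2 ≤ (∑ j, (z j).re^2) * (∑ j, y j^2) := h
            _ ≤ X^2 * R^2 := by
                rw [← hX2]
                exact mul_le_mul_of_nonneg_left (hysum y hyK) (by positivity)
            _ = (X*R)^2 := by ring
        calc (∑ j, (z j).re * y j) ≤ |∑ j, (z j).re * y j| := le_abs_self _
          _ = Real.sqrt ((∑ j, (z j).re * y j)^2) := (Real.sqrt_sq_eq_abs _).symm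
          _ ≤ Real.sqrt ((X*R)^2) := Real.sqrt_le_sqrt h2
          _ = X*R := Real.sqrt_sq (by positivity)
      have hsum : X^2 - 2*R*X ≤ ∑ j, ((z j).re - y j)^2 := by
        have hexp : ∑ j, ((z j).re - y j)^2
            = (∑ j, (z j).re^2) - 2*(∑ j, (z j).re * y j) + ∑ j, y j^2 := by
          have hj : ∀ j, ((z j).re - y j)^2 = (z j).re^2 - 2*((z j).re * y j) + y j^2 :=
            fun j => by ring
          simp_rw [hj, Finset.sum_add_distrib, Finset.sum_sub_distrib, ← Finset.mul_sum]
        have hy0 : (0:ℝ) ≤ ∑ j, y j^2 := Finset.sum_nonneg fun j _ => sq_nonneg _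
        rw [hexp, ← hX2]
        nlinarith
      have hre : (∑ j, ((z j).im^2 - ((z j).re - y j)^2))/t ≤ (Y^2 - X^2 + 2*R*X)/t := by
        gcongr
        rw [Finset.sum_sub_distrib, ← hY2]
        linarith
      exact mul_le_mul_of_nonneg_left (Real.exp_le_exp.2 hre) (norm_nonneg _)
  have hFz : ‖F z‖ ≤ |c0| * (I * E) := by
    rw [hF z, norm_mul]
    have h1 : ‖((c0:ℝ):ℂ)‖ = |c0| := by rw [Complex.norm_real, Real.norm_eq_abs]
    rw [h1]
    have h2 : ‖∫ y, g z y‖ ≤ I * E := by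
      have h3 := norm_integral_le_of_norm_le (hnormint.mul_const E)
        (Filter.Eventually.of_forall hpt)
      rwa [integral_mul_const] at h3
    exact mul_le_mul_of_nonneg_left h2 (abs_nonneg _)
  have hfin : E * Real.exp (N * Real.sqrt (∑ j, ‖z j‖^2)) ≤ Real.exp (b^2/(4*a)) := by
    rw [hEdef, ← Real.exp_add]
    apply Real.exp_le_exp.2
    have hNZ : N * Real.sqrt (∑ j, ‖z j‖^2) ≤ 2*N*X := by
      calc N * Real.sqrt (∑ j, ‖z j‖^2) ≤ N * (2*X) :=
            mul_le_mul_of_nonneg_left hZ hN.le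
        _ = 2*N*X := by ring
    have key : (Y^2 - X^2 + 2*R*X)/t + 2*N*X ≤ b^2/(4*a) := by
      have h1 : (Y^2 - X^2 + 2*R*X)/t ≤ (C^2*X^2 - X^2 + 2*R*X)/t := by gcongr
      have h2 : (C^2*X^2 - X^2 + 2*R*X)/t + 2*N*X = -(a*X^2) + b*X := by
        rw [hadef, hbdef]; field_simp; ring
      have h3 : -(a*X^2) + b*X ≤ b^2/(4*a) := by
        rw [le_div_iff₀ (by positivity)]
        nlinarith [sq_nonneg (2*a*X - b)]
      linarith
    linarith
  have h4 : ‖F z‖ * Real.exp (N * Real.sqrt (∑ j, ‖z j‖^2))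
      ≤ (|c0| * (I * E)) * Real.exp (N * Real.sqrt (∑ j, ‖z j‖^2)) :=
    mul_le_mul_of_nonneg_right hFz (Real.exp_pos _).le
  have h5 : (|c0| * (I * E)) * Real.exp (N * Real.sqrt (∑ j, ‖z j‖^2))
      = |c0| * I * (E * Real.exp (N * Real.sqrt (∑ j, ‖z j‖^2))) := by ring
  have h6 : |c0| * I * (E * Real.exp (N * Real.sqrt (∑ j, ‖z j‖^2)))
      ≤ |c0| * I * Real.exp (b^2/(4*a)) :=
    mul_le_mul_of_nonneg_left hfin (mul_nonneg (abs_nonneg _) hI0)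
  linarith [h4, h5.le, h5.ge, h6]
end

section
/- Let f : ℝⁿ → ℂ be continuous with compact support and let f_t be its convolution with the Gaussian heat kernel at time t > 0. Then e^{|x|²} (f(x) − f_t(x)) converges to 0 uniformly in x as t → 0⁺; in particular f_t → f in L²(ℝⁿ, μ) for any locally finite Borel measure μ satisfying μ({x : |x| ≤ R}) ≤ C e^{R²} for all R (e.g., any measure with density bounded by a polynomial times e^{|x|²}). -/
open MeasureTheory Real

variable {n : ℕ}

local notation "E" n => EuclideanSpace ℝ (Fin n)

lemma gauss_integrable0 {b : ℝ} (hb : 0 < b) :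
    Integrable fun v : E n => rexp (-b * ‖v‖ ^ 2) := by
  have h := (GaussianFourier.integrable_cexp_neg_mul_sq_norm_add (V := E n)
    (b := (b : ℂ)) (by simpa using hb) 0 0).norm
  refine h.congr (Filter.Eventually.of_forall fun v => ?_)
  simp [Complex.norm_exp, ← Complex.ofReal_pow]

lemma gauss_integrable {t : ℝ} (ht : 0 < t) (x : E n) :
    Integrable fun y : E n => rexp (-‖x - y‖ ^ 2 / t) := by
  have h := (gauss_integrable0 (n := n) (b := 1 / t) (by positivity)).comp_sub_left x
  refine h.congr (Filter.Eventually.of_forall fun y => ?_)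
  ring_nf

lemma gauss_integral {t : ℝ} (ht : 0 < t) (x : E n) :
    ∫ y : E n, rexp (-‖x - y‖ ^ 2 / t) = (π * t) ^ ((n : ℝ) / 2) := by
  rw [integral_sub_left_eq_self (fun y : E n => rexp (-‖y‖ ^ 2 / t)) volume x]
  have : ∀ y : E n, rexp (-‖y‖ ^ 2 / t) = rexp (-(1 / t) * ‖y‖ ^ 2) := by
    intro y; ring_nf
  simp_rw [this]
  rw [GaussianFourier.integral_rexp_neg_mul_sq_norm (by positivity)]
  rw [finrank_euclideanSpace_fin]
  rw [div_div_eq_mul_div, div_one]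

lemma gauss_cont {t : ℝ} (x : E n) :
    Continuous fun y : E n => rexp (-‖x - y‖ ^ 2 / t) :=
  Real.continuous_exp.comp (((continuous_const.sub continuous_id).norm.pow 2).neg.div_const t)

set_option maxHeartbeats 1000000 in
lemma key {f : (E n) → ℂ} (hf : Continuous f) (hsupp : HasCompactSupport f)
    {R M ε' r : ℝ} (hR : 0 ≤ R) (hsuppR : tsupport f ⊆ Metric.closedBall 0 R)
    (hM : ∀ x, ‖f x‖ ≤ M) (hM0 : 0 ≤ M)
    (hr0 : 0 < r) (hr1 : r ≤ 1) (hε' : 0 ≤ ε')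
    (hur : ∀ a b : E n, dist a b ≤ r → ‖f a - f b‖ ≤ ε')
    {t : ℝ} (ht : 0 < t) (ht8 : t ≤ 1/8) (x : E n) :
    rexp (‖x‖ ^ 2) * ‖f x - ((π * t) ^ (-(n : ℝ)/2) : ℝ) • ∫ y, rexp (-‖x - y‖ ^ 2 / t) • f y‖ ≤
      rexp ((R+1)^2) * ε'
      + rexp (R^2) * M * 2 ^ ((n : ℝ)/2) * rexp (-(r^2/2) * t⁻¹)
      + M * (volume (Metric.closedBall (0 : E n) R)).toReal * rexp ((2*R+2)^2)
        * (π ^ (-(n : ℝ)/2) * ((t⁻¹) ^ ((n : ℝ)/2) * rexp (-(r^2/2) * t⁻¹))) := by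
  set c : ℝ := (π * t) ^ (-(n : ℝ)/2) with hcdef
  set V : ℝ := (volume (Metric.closedBall (0 : E n) R)).toReal with hVdef
  have hπt : 0 < π * t := by positivity
  have hc : 0 < c := rpow_pos_of_pos hπt _
  have hV0 : 0 ≤ V := ENNReal.toReal_nonneg
  set K : (E n) → ℝ := fun y => rexp (-‖x - y‖ ^ 2 / t) with hKdef
  have hK : Integrable K := gauss_integrable ht x
  have hK2 : Integrable fun y : E n => rexp (-‖x - y‖ ^ 2 / (2*t)) :=
    gauss_integrable (by positivity) x
  have hKc : Continuous K := gauss_cont x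
  -- key identity
  have I1 : Integrable fun y : E n => K y • f x := hK.smul_const (f x)
  have I2 : Integrable fun y : E n => K y • f y :=
    (hKc.smul hf).integrable_of_hasCompactSupport hsupp.smul_left
  have hid : f x - c • ∫ y, K y • f y = c • ∫ y, K y • (f x - f y) := by
    have h1 : ∫ y, K y • (f x - f y) = (∫ y, K y • f x) - ∫ y, K y • f y := by
      rw [← integral_sub I1 I2]; congr 1; funext y; rw [smul_sub]
    have h2 : ∫ y, K y • f x = ((π * t) ^ ((n : ℝ)/2) : ℝ) • f x := by
      rw [integral_smul_const, gauss_integral ht x]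
    have e1 : c * (π * t) ^ ((n : ℝ)/2) = 1 := by
      rw [hcdef, ← Real.rpow_add hπt, neg_div, neg_add_cancel, Real.rpow_zero]
    rw [h1, h2, smul_sub, smul_smul, e1, one_smul]
  set g : (E n) → ℝ := fun y => K y * ‖f x - f y‖ with hgdef
  have hg0 : ∀ y, 0 ≤ g y := fun y => mul_nonneg (exp_pos _).le (norm_nonneg _)
  have hgi : Integrable g := by
    refine (hK.mul_const (2*M)).mono' ((hKc.mul (continuous_const.sub hf).norm).aestronglyMeasurable)
      (Filter.Eventually.of_forall fun y => ?_)
    rw [Real.norm_of_nonneg (hg0 y)]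
    have : ‖f x - f y‖ ≤ 2 * M := by
      calc ‖f x - f y‖ ≤ ‖f x‖ + ‖f y‖ := norm_sub_le _ _
        _ ≤ 2 * M := by have := hM x; have := hM y; linarith
    exact mul_le_mul_of_nonneg_left this (exp_pos _).le
  have hnorm : ‖f x - c • ∫ y, K y • f y‖ ≤ c * ∫ y, g y := by
    rw [hid, norm_smul, Real.norm_of_nonneg hc.le]
    refine mul_le_mul_of_nonneg_left ?_ hc.le
    calc ‖∫ y, K y • (f x - f y)‖ ≤ ∫ y, ‖K y • (f x - f y)‖ := norm_integral_le_integral_norm _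
      _ = ∫ y, g y := by
          congr 1; funext y
          rw [norm_smul, Real.norm_of_nonneg (exp_pos _).le]
  -- split into near and far parts
  have hsplit : ∫ y, g y = (∫ y in Metric.closedBall x r, g y)
      + ∫ y in (Metric.closedBall x r)ᶜ, g y :=
    (integral_add_compl measurableSet_closedBall hgi).symm
  have hS0 : 0 ≤ ∫ y in Metric.closedBall x r, g y :=
    setIntegral_nonneg measurableSet_closedBall (fun y _ => hg0 y)
  -- near bound
  have hnear : rexp (‖x‖ ^ 2) * ∫ y in Metric.closedBall x r, g y ≤
      rexp ((R+1)^2) * ε' * (π * t) ^ ((n : ℝ)/2) := by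
    by_cases hx : ‖x‖ ≤ R + r
    · have h1 : ∫ y in Metric.closedBall x r, g y ≤ ∫ y in Metric.closedBall x r, K y * ε' := by
        refine setIntegral_mono_on hgi.integrableOn (hK.mul_const ε').integrableOn
          measurableSet_closedBall (fun y hy => ?_)
        refine mul_le_mul_of_nonneg_left ?_ (exp_pos _).le
        exact hur x y (by rw [dist_comm]; exact Metric.mem_closedBall.1 hy)
      have h2 : ∫ y in Metric.closedBall x r, K y * ε' ≤ ∫ y, K y * ε' :=
        setIntegral_le_integral (hK.mul_const ε')
          (Filter.Eventually.of_forall fun y => mul_nonneg (exp_pos _).le hε')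
      have h3 : ∫ y, K y * ε' = (π * t) ^ ((n : ℝ)/2) * ε' := by
        rw [integral_mul_const, gauss_integral ht x]
      have hxw : rexp (‖x‖ ^ 2) ≤ rexp ((R+1)^2) := by
        apply exp_le_exp.2
        have hx1 : ‖x‖ ≤ R + 1 := le_trans hx (by linarith)
        nlinarith [norm_nonneg x]
      calc rexp (‖x‖ ^ 2) * ∫ y in Metric.closedBall x r, g y
          ≤ rexp ((R+1)^2) * ((π * t) ^ ((n : ℝ)/2) * ε') := by
            apply mul_le_mul hxw (by linarith) hS0 (exp_pos _).le
        _ = rexp ((R+1)^2) * ε' * (π * t) ^ ((n : ℝ)/2) := by ring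
    · push_neg at hx
      have h0 : ∫ y in Metric.closedBall x r, g y = 0 := by
        apply setIntegral_eq_zero_of_forall_eq_zero
        intro y hy
        have hy' : dist y x ≤ r := Metric.mem_closedBall.1 hy
        have hfx : f x = 0 := by
          apply image_eq_zero_of_notMem_tsupport
          intro hmem
          have : ‖x‖ ≤ R := mem_closedBall_zero_iff.1 (hsuppR hmem)
          linarith
        have hfy : f y = 0 := by
          apply image_eq_zero_of_notMem_tsupport
          intro hmem
          have h5 : ‖y‖ ≤ R := mem_closedBall_zero_iff.1 (hsuppR hmem)
          have h6 : ‖x‖ - ‖y‖ ≤ ‖x - y‖ := norm_sub_norm_le x y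
          have h7 : ‖x - y‖ ≤ r := by rw [← dist_eq_norm, dist_comm]; exact hy'
          linarith
        simp [hgdef, hfx, hfy]
      rw [h0, mul_zero]
      positivity
  -- far bounds
  have hg1i : Integrable (fun y : E n => K y * ‖f x‖) := hK.mul_const _
  have hg2i : Integrable (fun y : E n => K y * ‖f y‖) :=
    (hKc.mul hf.norm).integrable_of_hasCompactSupport hsupp.norm.mul_left
  have hKb : ∀ a : ℝ, r ≤ a → 0 ≤ a → -(a^2) / t ≤ (-(r^2/2) * t⁻¹) + (-(a^2) / (2*t)) := by
    intro a ha ha0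
    have h1 : r^2 ≤ a^2 := by nlinarith
    have hti : 0 < t⁻¹ := inv_pos.2 ht
    rw [div_eq_mul_inv (-(a^2)) t, div_eq_mul_inv (-(a^2)) (2*t), mul_inv]
    nlinarith [mul_le_mul_of_nonneg_right h1 hti.le]
  have hdistSc : ∀ y : E n, y ∈ (Metric.closedBall x r)ᶜ → r ≤ ‖x - y‖ := by
    intro y hy
    have h1 : r < dist y x := lt_of_not_ge (fun h => hy (Metric.mem_closedBall.2 h))
    rw [dist_comm, dist_eq_norm] at h1
    linarith
  have hKSc : ∀ y : E n, y ∈ (Metric.closedBall x r)ᶜ →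
      K y ≤ rexp (-(r^2/2) * t⁻¹) * rexp (-‖x - y‖ ^ 2 / (2*t)) := by
    intro y hy
    rw [← Real.exp_add]
    exact exp_le_exp.2 (by simpa using hKb ‖x - y‖ (hdistSc y hy) (norm_nonneg _))
  have hfar0 : ∫ y in (Metric.closedBall x r)ᶜ, g y ≤
      (∫ y in (Metric.closedBall x r)ᶜ, K y * ‖f x‖)
      + ∫ y in (Metric.closedBall x r)ᶜ, K y * ‖f y‖ := by
    rw [← integral_add hg1i.integrableOn hg2i.integrableOn]
    refine setIntegral_mono_on hgi.integrableOn (hg1i.add hg2i).integrableOn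
      measurableSet_closedBall.compl (fun y hy => ?_)
    calc g y = K y * ‖f x - f y‖ := rfl
      _ ≤ K y * (‖f x‖ + ‖f y‖) := mul_le_mul_of_nonneg_left (norm_sub_le _ _) (exp_pos _).le
      _ = K y * ‖f x‖ + K y * ‖f y‖ := by ring
  -- F1
  have hF1 : ∫ y in (Metric.closedBall x r)ᶜ, K y * ‖f x‖ ≤
      rexp (-(r^2/2) * t⁻¹) * (π * (2*t)) ^ ((n : ℝ)/2) * ‖f x‖ := by
    have h1 : ∫ y in (Metric.closedBall x r)ᶜ, K y * ‖f x‖ ≤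
        ∫ y in (Metric.closedBall x r)ᶜ,
          (rexp (-(r^2/2) * t⁻¹) * rexp (-‖x - y‖ ^ 2 / (2*t))) * ‖f x‖ :=
      setIntegral_mono_on hg1i.integrableOn ((hK2.const_mul _).mul_const _).integrableOn
        measurableSet_closedBall.compl
        (fun y hy => mul_le_mul_of_nonneg_right (hKSc y hy) (norm_nonneg _))
    have h2 : ∫ y in (Metric.closedBall x r)ᶜ,
          (rexp (-(r^2/2) * t⁻¹) * rexp (-‖x - y‖ ^ 2 / (2*t))) * ‖f x‖ ≤
        ∫ y, (rexp (-(r^2/2) * t⁻¹) * rexp (-‖x - y‖ ^ 2 / (2*t))) * ‖f x‖ :=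
      setIntegral_le_integral ((hK2.const_mul _).mul_const _)
        (Filter.Eventually.of_forall fun y => by positivity)
    have h3 : ∫ y, (rexp (-(r^2/2) * t⁻¹) * rexp (-‖x - y‖ ^ 2 / (2*t))) * ‖f x‖ =
        rexp (-(r^2/2) * t⁻¹) * (π * (2*t)) ^ ((n : ℝ)/2) * ‖f x‖ := by
      rw [integral_mul_const, integral_const_mul, gauss_integral (by positivity) x]
    linarith
  have hfxw : rexp (‖x‖ ^ 2) * ‖f x‖ ≤ rexp (R^2) * M := by
    by_cases hx : x ∈ tsupport f
    · have hxR : ‖x‖ ≤ R := mem_closedBall_zero_iff.1 (hsuppR hx)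
      exact mul_le_mul (exp_le_exp.2 (by nlinarith [norm_nonneg x])) (hM x)
        (norm_nonneg _) (exp_pos _).le
    · rw [image_eq_zero_of_notMem_tsupport hx]
      simp
      positivity
  -- F2
  set q : ℝ := max (‖x‖ - R) 0 with hqdef
  have hq0 : 0 ≤ q := le_max_right _ _
  have hptg2 : ∀ y ∈ (Metric.closedBall x r)ᶜ, K y * ‖f y‖ ≤
      (Metric.closedBall (0 : E n) R).indicator
        (fun _ => rexp (-(r^2/2) * t⁻¹) * rexp (-(q^2) / (2*t)) * M) y := by
    intro y hy
    by_cases hyR : y ∈ Metric.closedBall (0 : E n) R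
    · rw [Set.indicator_of_mem hyR]
      have hyn : ‖y‖ ≤ R := mem_closedBall_zero_iff.1 hyR
      have hxy : q ≤ ‖x - y‖ := by
        apply max_le
        · have := norm_sub_norm_le x y; linarith
        · exact norm_nonneg _
      have hKy : K y ≤ rexp (-(r^2/2) * t⁻¹) * rexp (-(q^2) / (2*t)) := by
        rw [← Real.exp_add]
        apply exp_le_exp.2
        have h1 := hKb ‖x - y‖ (hdistSc y hy) (norm_nonneg _)
        have h2 : -(‖x - y‖^2) / (2*t) ≤ -(q^2) / (2*t) := by
          apply div_le_div_of_nonneg_right ?_ (by positivity)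
          · nlinarith
        calc -‖x - y‖ ^ 2 / t ≤ (-(r^2/2) * t⁻¹) + (-(‖x - y‖^2) / (2*t)) := by
              simpa using h1
          _ ≤ (-(r^2/2) * t⁻¹) + (-(q^2) / (2*t)) := by linarith
      exact mul_le_mul hKy (hM y) (norm_nonneg _) (by positivity)
    · rw [Set.indicator_of_notMem hyR,
        image_eq_zero_of_notMem_tsupport (fun hm => hyR (hsuppR hm))]
      simp
  have hindint : Integrable ((Metric.closedBall (0 : E n) R).indicator
      (fun _ => rexp (-(r^2/2) * t⁻¹) * rexp (-(q^2) / (2*t)) * M)) := by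
    refine (IntegrableOn.integrable_indicator ?_ measurableSet_closedBall)
    exact integrableOn_const (isCompact_closedBall _ _).measure_lt_top.ne
  have hF2 : ∫ y in (Metric.closedBall x r)ᶜ, K y * ‖f y‖ ≤
      rexp (-(r^2/2) * t⁻¹) * rexp (-(q^2) / (2*t)) * M * V := by
    calc ∫ y in (Metric.closedBall x r)ᶜ, K y * ‖f y‖
        ≤ ∫ y in (Metric.closedBall x r)ᶜ, (Metric.closedBall (0 : E n) R).indicator
            (fun _ => rexp (-(r^2/2) * t⁻¹) * rexp (-(q^2) / (2*t)) * M) y :=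
          setIntegral_mono_on hg2i.integrableOn hindint.integrableOn
            measurableSet_closedBall.compl hptg2
      _ ≤ ∫ y, (Metric.closedBall (0 : E n) R).indicator
            (fun _ => rexp (-(r^2/2) * t⁻¹) * rexp (-(q^2) / (2*t)) * M) y :=
          setIntegral_le_integral hindint (Filter.Eventually.of_forall fun y =>
            Set.indicator_nonneg (fun _ _ => by positivity) y)
      _ = (volume (Metric.closedBall (0 : E n) R)).toReal •
            (rexp (-(r^2/2) * t⁻¹) * rexp (-(q^2) / (2*t)) * M) :=
          integral_indicator_const _ measurableSet_closedBall
      _ = rexp (-(r^2/2) * t⁻¹) * rexp (-(q^2) / (2*t)) * M * V := by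
          rw [smul_eq_mul, ← hVdef]; ring
  have hw : rexp (‖x‖ ^ 2) * rexp (-(q^2) / (2*t)) ≤ rexp ((2*R+2)^2) := by
    rw [← Real.exp_add]
    apply exp_le_exp.2
    by_cases hs : ‖x‖ ≤ 2*R+2
    · have h1 : 0 ≤ q^2 / (2*t) := by positivity
      rw [neg_div]
      nlinarith [norm_nonneg x, h1, mul_nonneg (by linarith : (0:ℝ) ≤ 2*R+2-‖x‖)
        (by linarith [norm_nonneg x] : (0:ℝ) ≤ 2*R+2+‖x‖)]
    · push_neg at hs
      have hqe : q = ‖x‖ - R := max_eq_left (by linarith)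
      have h8 : (4 : ℝ) ≤ (2*t)⁻¹ := by
        rw [le_inv_comm₀ (by norm_num) (by positivity)]
        linarith
      rw [div_eq_mul_inv]
      have h9 : 4 * q^2 ≤ q^2 * (2*t)⁻¹ := by nlinarith [sq_nonneg q]
      rw [hqe] at h9
      nlinarith [hR, hs]
  -- assemble
  have e1 : c * (π * t) ^ ((n : ℝ)/2) = 1 := by
    rw [hcdef, ← Real.rpow_add hπt, neg_div, neg_add_cancel, Real.rpow_zero]
  have e2 : c * (π * (2*t)) ^ ((n : ℝ)/2) = 2 ^ ((n : ℝ)/2) := by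
    have : (π * (2*t)) ^ ((n : ℝ)/2) = 2 ^ ((n : ℝ)/2) * (π * t) ^ ((n : ℝ)/2) := by
      rw [show π * (2*t) = 2 * (π * t) by ring, Real.mul_rpow (by norm_num) hπt.le]
    rw [this]
    calc c * (2 ^ ((n : ℝ)/2) * (π * t) ^ ((n : ℝ)/2))
        = 2 ^ ((n : ℝ)/2) * (c * (π * t) ^ ((n : ℝ)/2)) := by ring
      _ = 2 ^ ((n : ℝ)/2) := by rw [e1, mul_one]
  have e3 : c = π ^ (-(n : ℝ)/2) * (t⁻¹) ^ ((n : ℝ)/2) := by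
    rw [hcdef, Real.mul_rpow pi_pos.le ht.le]
    congr 1
    rw [Real.inv_rpow ht.le, ← Real.rpow_neg ht.le, neg_div]
  have hnormle : rexp (‖x‖ ^ 2) * ‖f x - c • ∫ y, K y • f y‖ ≤
      c * (rexp (‖x‖ ^ 2) * ∫ y in Metric.closedBall x r, g y)
      + c * (rexp (‖x‖ ^ 2) * ∫ y in (Metric.closedBall x r)ᶜ, g y) := by
    have h1 := mul_le_mul_of_nonneg_left hnorm (exp_pos (‖x‖^2)).le
    calc rexp (‖x‖ ^ 2) * ‖f x - c • ∫ y, K y • f y‖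
        ≤ rexp (‖x‖ ^ 2) * (c * ∫ y, g y) := h1
      _ = c * (rexp (‖x‖ ^ 2) * ∫ y in Metric.closedBall x r, g y)
          + c * (rexp (‖x‖ ^ 2) * ∫ y in (Metric.closedBall x r)ᶜ, g y) := by
          rw [hsplit]; ring
  have hfarw : rexp (‖x‖ ^ 2) * ∫ y in (Metric.closedBall x r)ᶜ, g y ≤
      rexp (R^2) * M * (rexp (-(r^2/2) * t⁻¹) * (π * (2*t)) ^ ((n : ℝ)/2))
      + rexp ((2*R+2)^2) * (rexp (-(r^2/2) * t⁻¹) * (M * V)) := by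
    have hstep : rexp (‖x‖ ^ 2) * ∫ y in (Metric.closedBall x r)ᶜ, g y ≤
        rexp (‖x‖ ^ 2) * ((rexp (-(r^2/2) * t⁻¹) * (π * (2*t)) ^ ((n : ℝ)/2) * ‖f x‖)
          + rexp (-(r^2/2) * t⁻¹) * rexp (-(q^2) / (2*t)) * M * V) := by
      apply mul_le_mul_of_nonneg_left ?_ (exp_pos _).le
      linarith
    refine le_trans hstep ?_
    have hA : rexp (‖x‖ ^ 2) * (rexp (-(r^2/2) * t⁻¹) * (π * (2*t)) ^ ((n : ℝ)/2) * ‖f x‖)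
        ≤ rexp (R^2) * M * (rexp (-(r^2/2) * t⁻¹) * (π * (2*t)) ^ ((n : ℝ)/2)) := by
      calc rexp (‖x‖ ^ 2) * (rexp (-(r^2/2) * t⁻¹) * (π * (2*t)) ^ ((n : ℝ)/2) * ‖f x‖)
          = (rexp (‖x‖ ^ 2) * ‖f x‖) * (rexp (-(r^2/2) * t⁻¹) * (π * (2*t)) ^ ((n : ℝ)/2)) := by
            ring
        _ ≤ (rexp (R^2) * M) * (rexp (-(r^2/2) * t⁻¹) * (π * (2*t)) ^ ((n : ℝ)/2)) := by
            apply mul_le_mul_of_nonneg_right hfxw (by positivity)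
    have hB : rexp (‖x‖ ^ 2) * (rexp (-(r^2/2) * t⁻¹) * rexp (-(q^2) / (2*t)) * M * V)
        ≤ rexp ((2*R+2)^2) * (rexp (-(r^2/2) * t⁻¹) * (M * V)) := by
      calc rexp (‖x‖ ^ 2) * (rexp (-(r^2/2) * t⁻¹) * rexp (-(q^2) / (2*t)) * M * V)
          = (rexp (‖x‖ ^ 2) * rexp (-(q^2) / (2*t))) * (rexp (-(r^2/2) * t⁻¹) * (M * V)) := by
            ring
        _ ≤ rexp ((2*R+2)^2) * (rexp (-(r^2/2) * t⁻¹) * (M * V)) := by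
            apply mul_le_mul_of_nonneg_right hw (by positivity)
    calc rexp (‖x‖ ^ 2) * ((rexp (-(r^2/2) * t⁻¹) * (π * (2*t)) ^ ((n : ℝ)/2) * ‖f x‖)
          + rexp (-(r^2/2) * t⁻¹) * rexp (-(q^2) / (2*t)) * M * V)
        = rexp (‖x‖ ^ 2) * (rexp (-(r^2/2) * t⁻¹) * (π * (2*t)) ^ ((n : ℝ)/2) * ‖f x‖)
          + rexp (‖x‖ ^ 2) * (rexp (-(r^2/2) * t⁻¹) * rexp (-(q^2) / (2*t)) * M * V) := by ring
      _ ≤ _ := add_le_add hA hB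
  calc rexp (‖x‖ ^ 2) * ‖f x - c • ∫ y, K y • f y‖
      ≤ c * (rexp (‖x‖ ^ 2) * ∫ y in Metric.closedBall x r, g y)
        + c * (rexp (‖x‖ ^ 2) * ∫ y in (Metric.closedBall x r)ᶜ, g y) := hnormle
    _ ≤ c * (rexp ((R+1)^2) * ε' * (π * t) ^ ((n : ℝ)/2))
        + c * (rexp (R^2) * M * (rexp (-(r^2/2) * t⁻¹) * (π * (2*t)) ^ ((n : ℝ)/2))
          + rexp ((2*R+2)^2) * (rexp (-(r^2/2) * t⁻¹) * (M * V))) :=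
        add_le_add (mul_le_mul_of_nonneg_left hnear hc.le)
          (mul_le_mul_of_nonneg_left hfarw hc.le)
    _ = rexp ((R+1)^2) * ε'
        + rexp (R^2) * M * 2 ^ ((n : ℝ)/2) * rexp (-(r^2/2) * t⁻¹)
        + M * V * rexp ((2*R+2)^2)
          * (π ^ (-(n : ℝ)/2) * ((t⁻¹) ^ ((n : ℝ)/2) * rexp (-(r^2/2) * t⁻¹))) := by
        linear_combination (rexp ((R+1)^2) * ε') * e1
          + (rexp (R^2) * M * rexp (-(r^2/2) * t⁻¹)) * e2
          + (rexp ((2*R+2)^2) * rexp (-(r^2/2) * t⁻¹) * (M * V)) * e3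

lemma dom_integrable {n : ℕ} (μ : Measure (EuclideanSpace ℝ (Fin n))) (C : ℝ)
    (hC : ∀ R : ℝ, μ (Metric.closedBall 0 R) ≤ ENNReal.ofReal (C * rexp (R ^ 2))) :
    Integrable (fun x : E n => rexp (-2 * ‖x‖ ^ 2)) μ := by
  have hcont : Continuous fun x : E n => rexp (-2 * ‖x‖ ^ 2) :=
    Real.continuous_exp.comp (continuous_const.mul (continuous_norm.pow 2))
  refine ⟨hcont.aestronglyMeasurable, ?_⟩
  rw [hasFiniteIntegral_iff_ofReal (Filter.Eventually.of_forall fun x => (exp_pos _).le)]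
  set A : ℕ → Set (E n) := fun k => (fun x : E n => ‖x‖) ⁻¹' (Set.Ico (k : ℝ) (k+1)) with hA
  have hAm : ∀ k, MeasurableSet (A k) := fun k => measurable_norm measurableSet_Ico
  have hAd : Pairwise (Function.onFun Disjoint A) := by
    intro i j hij
    simp only [Function.onFun, Set.disjoint_left, hA, Set.mem_preimage, Set.mem_Ico]
    intro x hx1 hx2
    apply hij
    have h1 : (i : ℝ) < (j : ℝ) + 1 := lt_of_le_of_lt hx1.1 hx2.2
    have h2 : (j : ℝ) < (i : ℝ) + 1 := lt_of_le_of_lt hx2.1 hx1.2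
    have h1' : i < j + 1 := by exact_mod_cast h1
    have h2' : j < i + 1 := by exact_mod_cast h2
    omega
  have hAu : (⋃ k, A k) = Set.univ := by
    ext x
    simp only [Set.mem_iUnion, Set.mem_univ, iff_true, hA, Set.mem_preimage, Set.mem_Ico]
    exact ⟨⌊‖x‖⌋₊, Nat.floor_le (norm_nonneg x), Nat.lt_floor_add_one _⟩
  have hterm : ∀ k : ℕ, ∫⁻ x in A k, ENNReal.ofReal (rexp (-2 * ‖x‖ ^ 2)) ∂μ ≤
      ENNReal.ofReal (max C 0 * rexp 3 * rexp (-1) ^ k) := by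
    intro k
    calc ∫⁻ x in A k, ENNReal.ofReal (rexp (-2 * ‖x‖ ^ 2)) ∂μ
        ≤ ∫⁻ _x in A k, ENNReal.ofReal (rexp (-2 * (k : ℝ) ^ 2)) ∂μ := by
          refine setLIntegral_mono measurable_const (fun x hx => ?_)
          apply ENNReal.ofReal_le_ofReal
          apply exp_le_exp.2
          have hx1 : (k : ℝ) ≤ ‖x‖ := hx.1
          have hk0 : (0:ℝ) ≤ (k : ℝ) := Nat.cast_nonneg k
          nlinarith
      _ = ENNReal.ofReal (rexp (-2 * (k : ℝ) ^ 2)) * μ (A k) := setLIntegral_const _ _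
      _ ≤ ENNReal.ofReal (rexp (-2 * (k : ℝ) ^ 2)) * ENNReal.ofReal (C * rexp (((k : ℝ)+1) ^ 2)) := by
          apply mul_le_mul_right
          refine le_trans (measure_mono ?_) (hC ((k : ℝ)+1))
          intro x hx
          exact mem_closedBall_zero_iff.2 (le_of_lt hx.2)
      _ ≤ ENNReal.ofReal (rexp (-2 * (k : ℝ) ^ 2) * (max C 0 * rexp (((k : ℝ)+1) ^ 2))) := by
          rw [← ENNReal.ofReal_mul (exp_pos _).le]
          apply ENNReal.ofReal_le_ofReal
          apply mul_le_mul_of_nonneg_left ?_ (exp_pos _).le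
          exact mul_le_mul_of_nonneg_right (le_max_left _ _) (exp_pos _).le
      _ ≤ ENNReal.ofReal (max C 0 * rexp 3 * rexp (-1) ^ k) := by
          apply ENNReal.ofReal_le_ofReal
          have hrw : rexp (-2 * (k : ℝ) ^ 2) * (max C 0 * rexp (((k : ℝ)+1) ^ 2)) =
              max C 0 * rexp (((k : ℝ)+1) ^ 2 - 2 * (k : ℝ) ^ 2) := by
            rw [Real.exp_sub, div_eq_mul_inv, ← Real.exp_neg]
            ring
          rw [hrw]
          have hexpk : rexp (-1) ^ k = rexp (-(k : ℝ)) := by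
            rw [← Real.exp_nat_mul]
            norm_num
          rw [hexpk, mul_assoc, ← Real.exp_add]
          apply mul_le_mul_of_nonneg_left ?_ (le_max_right C 0)
          apply exp_le_exp.2
          have : ((k:ℝ)+1) ^ 2 - 2 * (k:ℝ) ^ 2 ≤ 3 + -(k:ℝ) := by
            rcases k with _ | _ | m
            · norm_num
            · norm_num
            · push_cast
              nlinarith [sq_nonneg ((m : ℝ))]
          linarith
  calc ∫⁻ x, ENNReal.ofReal (rexp (-2 * ‖x‖ ^ 2)) ∂μ
      = ∫⁻ x in ⋃ k, A k, ENNReal.ofReal (rexp (-2 * ‖x‖ ^ 2)) ∂μ := by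
        rw [hAu, Measure.restrict_univ]
    _ = ∑' k, ∫⁻ x in A k, ENNReal.ofReal (rexp (-2 * ‖x‖ ^ 2)) ∂μ := lintegral_iUnion hAm hAd _
    _ ≤ ∑' k, ENNReal.ofReal (max C 0 * rexp 3 * rexp (-1) ^ k) := ENNReal.tsum_le_tsum hterm
    _ = ENNReal.ofReal (∑' k, max C 0 * rexp 3 * rexp (-1) ^ k) :=
        (ENNReal.ofReal_tsum_of_nonneg (fun k => by positivity)
          ((summable_geometric_of_lt_one (exp_pos _).le
            (exp_lt_one_iff.2 (by norm_num))).mul_left _)).symm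
    _ < ⊤ := ENNReal.ofReal_lt_top

set_option maxHeartbeats 1000000 in
lemma part1 {n : ℕ} (f : EuclideanSpace ℝ (Fin n) → ℂ) (hf : Continuous f)
    (hsupp : HasCompactSupport f) :
    ∀ ε : ℝ, 0 < ε → ∃ δ : ℝ, 0 < δ ∧ ∀ t ∈ Set.Ioo (0 : ℝ) δ, ∀ x,
      rexp (‖x‖ ^ 2) * ‖f x - ((π * t) ^ (-(n : ℝ)/2) : ℝ) •
        ∫ y, rexp (-‖x - y‖ ^ 2 / t) • f y‖ ≤ ε := by
  intro ε hε
  obtain ⟨R0, hR0⟩ := hsupp.isBounded.subset_closedBall (0 : E n)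
  set R : ℝ := max R0 0 with hRdef
  have hR : 0 ≤ R := le_max_right _ _
  have hsuppR : tsupport f ⊆ Metric.closedBall 0 R :=
    hR0.trans (Metric.closedBall_subset_closedBall (le_max_left _ _))
  obtain ⟨M0, hM0⟩ := hf.bounded_above_of_compact_support hsupp
  set M : ℝ := max M0 0 with hMdef
  have hM : ∀ x, ‖f x‖ ≤ M := fun x => (hM0 x).trans (le_max_left _ _)
  have hM0' : 0 ≤ M := le_max_right _ _
  set ε' : ℝ := ε / (2 * rexp ((R+1)^2)) with hε'def
  have hε' : 0 < ε' := by positivity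
  have hu := (hsupp.uniformContinuous_of_continuous hf)
  rw [Metric.uniformContinuous_iff] at hu
  obtain ⟨r0, hr0pos, hr0⟩ := hu ε' hε'
  set r : ℝ := min (r0/2) 1 with hrdef
  have hrpos : 0 < r := lt_min (by linarith) one_pos
  have hr1 : r ≤ 1 := min_le_right _ _
  have hur : ∀ a b : E n, dist a b ≤ r → ‖f a - f b‖ ≤ ε' := by
    intro a b hab
    have : dist a b < r0 := lt_of_le_of_lt hab (lt_of_le_of_lt (min_le_left _ _) (by linarith))
    have := hr0 this
    rw [dist_eq_norm] at this
    exact this.le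
  set V : ℝ := (volume (Metric.closedBall (0 : E n) R)).toReal with hVdef
  set c1 : ℝ := rexp (R^2) * M * 2 ^ ((n : ℝ)/2) with hc1def
  set c2 : ℝ := M * V * rexp ((2*R+2)^2) * π ^ (-(n : ℝ)/2) with hc2def
  set φ : ℝ → ℝ := fun t => c1 * rexp (-(r^2/2) * t⁻¹)
    + c2 * ((t⁻¹) ^ ((n : ℝ)/2) * rexp (-(r^2/2) * t⁻¹)) with hφdef
  have h2 : Filter.Tendsto (fun t : ℝ => (t⁻¹) ^ ((n : ℝ)/2) * rexp (-(r^2/2) * t⁻¹))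
      (nhdsWithin 0 (Set.Ioi 0)) (nhds 0) := by
    have ha := tendsto_rpow_mul_exp_neg_mul_atTop_nhds_zero ((n : ℝ)/2) (r^2/2) (by positivity)
    have := ha.comp tendsto_inv_nhdsGT_zero
    simpa [Function.comp_def] using this
  have h3 : Filter.Tendsto (fun t : ℝ => rexp (-(r^2/2) * t⁻¹))
      (nhdsWithin 0 (Set.Ioi 0)) (nhds 0) := by
    have hb := tendsto_inv_nhdsGT_zero.const_mul_atTop (show (0:ℝ) < r^2/2 by positivity)
    have hc := Real.tendsto_exp_atBot.comp (Filter.tendsto_neg_atTop_atBot.comp hb)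
    refine hc.congr (fun t => ?_)
    simp [Function.comp, neg_mul]
  have hφ : Filter.Tendsto φ (nhdsWithin 0 (Set.Ioi 0)) (nhds 0) := by
    have h4 := (h3.const_mul c1).add (h2.const_mul c2)
    rw [mul_zero, mul_zero, add_zero] at h4
    exact h4
  have hev := hφ.eventually_lt_const (half_pos hε)
  obtain ⟨u, hu', hsub⟩ := mem_nhdsGT_iff_exists_Ioo_subset.1 hev
  refine ⟨min u (1/8), lt_min hu' (by norm_num), fun t ht x => ?_⟩
  have ht0 : 0 < t := ht.1
  have htu : t < u := lt_of_lt_of_le ht.2 (min_le_left _ _)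
  have ht8 : t ≤ 1/8 := le_of_lt (lt_of_lt_of_le ht.2 (min_le_right _ _))
  have hkey := key hf hsupp hR hsuppR hM hM0' hrpos hr1 hε'.le hur ht0 ht8 x
  have hφt : φ t < ε/2 := hsub ⟨ht0, htu⟩
  have heps : rexp ((R+1)^2) * ε' = ε/2 := by
    rw [hε'def]
    field_simp
  rw [hφdef] at hφt
  simp only at hφt
  rw [hc1def, hc2def] at hφt
  nlinarith [hkey, hφt, heps]

/-- For `f` continuous with compact support and `f_t` its Gaussian (heat kernel)
regularization, `e^{|x|²}(f(x) − f_t(x)) → 0` uniformly in `x` as `t → 0⁺`; in particular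
`f_t → f` in `L²(μ)` for any measure `μ` with `μ(B_R(0)) ≤ C e^{R²}`. -/
theorem heat_regularization_converges_uniformly_with_gaussian_weight
    {n : ℕ} (f : EuclideanSpace ℝ (Fin n) → ℂ) (hf : Continuous f)
    (hsupp : HasCompactSupport f)
    (ft : ℝ → EuclideanSpace ℝ (Fin n) → ℂ)
    (hft : ∀ t x, ft t x = ((Real.pi * t) ^ (-(n : ℝ) / 2) : ℝ) •
      ∫ y, Real.exp (-‖x - y‖ ^ 2 / t) • f y) :
    (∀ ε : ℝ, 0 < ε → ∃ δ : ℝ, 0 < δ ∧ ∀ t ∈ Set.Ioo (0 : ℝ) δ,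
      ∀ x, Real.exp (‖x‖ ^ 2) * ‖f x - ft t x‖ ≤ ε) ∧
    ∀ μ : Measure (EuclideanSpace ℝ (Fin n)),
      (∃ C : ℝ, ∀ R : ℝ, μ (Metric.closedBall 0 R) ≤ ENNReal.ofReal (C * Real.exp (R ^ 2))) →
      Filter.Tendsto (fun t => ∫ x, ‖f x - ft t x‖ ^ 2 ∂μ)
        (nhdsWithin 0 (Set.Ioi 0)) (nhds 0) := by
  have hpart1 : ∀ ε : ℝ, 0 < ε → ∃ δ : ℝ, 0 < δ ∧ ∀ t ∈ Set.Ioo (0 : ℝ) δ,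
      ∀ x, Real.exp (‖x‖ ^ 2) * ‖f x - ft t x‖ ≤ ε := by
    intro ε hε
    obtain ⟨δ, hδ, h⟩ := part1 f hf hsupp ε hε
    refine ⟨δ, hδ, fun t ht x => ?_⟩
    rw [hft t x]
    exact h t ht x
  refine ⟨hpart1, fun μ hμ => ?_⟩
  obtain ⟨C, hC⟩ := hμ
  have hD : Integrable (fun x : E n => rexp (-2 * ‖x‖ ^ 2)) μ := dom_integrable μ C hC
  rw [Metric.tendsto_nhds]
  intro ε hε
  set K : ℝ := ∫ x, rexp (-2 * ‖x‖ ^ 2) ∂μ with hKdef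
  have hK0 : 0 ≤ K := integral_nonneg fun x => (exp_pos _).le
  have hKK : 0 < ε / (2*(K+1)) := by positivity
  set ε₁ : ℝ := Real.sqrt (ε / (2*(K+1))) with hε₁def
  have hε₁ : 0 < ε₁ := Real.sqrt_pos.2 hKK
  obtain ⟨δ, hδ, hb⟩ := hpart1 ε₁ hε₁
  filter_upwards [Ioo_mem_nhdsGT_of_mem (Set.left_mem_Ico.2 hδ)] with t ht
  have hnn : 0 ≤ ∫ x, ‖f x - ft t x‖ ^ 2 ∂μ :=
    integral_nonneg fun x => by positivity
  rw [dist_zero_right, Real.norm_eq_abs, abs_of_nonneg hnn]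
  have hpt : ∀ x, ‖f x - ft t x‖ ^ 2 ≤ ε₁ ^ 2 * rexp (-2 * ‖x‖ ^ 2) := by
    intro x
    have h1 := hb t ht x
    have h2 : ‖f x - ft t x‖ ≤ ε₁ * rexp (-‖x‖ ^ 2) := by
      rw [Real.exp_neg, mul_comm, inv_mul_eq_div, le_div_iff₀ (exp_pos _)]
      nlinarith [h1]
    calc ‖f x - ft t x‖ ^ 2 ≤ (ε₁ * rexp (-‖x‖ ^ 2)) ^ 2 :=
          pow_le_pow_left₀ (norm_nonneg _) h2 2
      _ = ε₁ ^ 2 * rexp (-2 * ‖x‖ ^ 2) := by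
          rw [mul_pow]
          congr 1
          rw [← Real.exp_nat_mul]
          norm_num
  have hle : ∫ x, ‖f x - ft t x‖ ^ 2 ∂μ ≤ ε₁ ^ 2 * K := by
    calc ∫ x, ‖f x - ft t x‖ ^ 2 ∂μ ≤ ∫ x, ε₁ ^ 2 * rexp (-2 * ‖x‖ ^ 2) ∂μ :=
        integral_mono_of_nonneg (Filter.Eventually.of_forall fun x => by positivity)
          (hD.const_mul _) (Filter.Eventually.of_forall hpt)
      _ = ε₁ ^ 2 * K := by rw [integral_const_mul]
  have hsq : ε₁ ^ 2 = ε / (2*(K+1)) := Real.sq_sqrt hKK.le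
  have hfin : ε₁ ^ 2 * K < ε := by
    rw [hsq, div_mul_eq_mul_div, div_lt_iff₀ (by positivity)]
    nlinarith
  linarith
end
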